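/- For each n ≥ 1, |Σ_{λ ∈ H_n} (−1)^{ℓ(λ)} 2^{rep(λ)}| = F_n, the n-th Fibonacci number (F₁ = F₂ = 1, F_n = F_{n−1} + F_{n−2}). -/

import Mathlib

/-- A partition: a nonempty weakly decreasing list of positive integers. -/
def IsPartition (l : List ℕ) : Prop :=
  l ≠ [] ∧ l.Pairwise (· ≥ ·) ∧ ∀ x ∈ l, 0 < x

/-- The perimeter of a partition: largest part plus number of parts minus 1. -/
def perim (l : List ℕ) : ℕ := l.headI + l.length - 1

/-- Number of repeated parts: indices i with λ_i = λ_{i+1}. -/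
def repStat (l : List ℕ) : ℕ :=
  ((List.range (l.length - 1)).filter fun i => l.getD i 0 = l.getD (i + 1) 0).length

/-- Number of even parts. -/
def evenStat (l : List ℕ) : ℕ := l.countP fun x => x % 2 = 0

/-- Finset of weakly decreasing lists of length `m` with entries in `[1, a]`. -/
def Eset : ℕ → ℕ → Finset (List ℕ)
  | _, 0 => {[]}
  | a, m+1 => (Finset.Icc 1 a).biUnion fun b => (Eset b m).image (b :: ·)

/-- `hfun m a` is the sum of `2 ^ repStat (a :: t)` over `t ∈ Eset a m`. -/
def hfun : ℕ → ℕ → ℤ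
  | 0, _ => 1
  | m+1, a => hfun m a + ∑ b ∈ Finset.Icc 1 a, hfun m b

def Hfun (m a : ℕ) : ℤ := ∑ b ∈ Finset.Icc 1 a, hfun m b

lemma hfun_succ (m a : ℕ) : hfun (m+1) a = hfun m a + Hfun m a := rfl

lemma Hfun_zero (m : ℕ) : Hfun m 0 = 0 := by simp [Hfun]

lemma mem_Eset : ∀ (m a : ℕ) (l : List ℕ),
    l ∈ Eset a m ↔ l.length = m ∧ l.Pairwise (· ≥ ·) ∧ ∀ x ∈ l, 1 ≤ x ∧ x ≤ a := by
  intro m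
  induction m with
  | zero =>
    intro a l
    simp [Eset, List.length_eq_zero_iff]
    rintro rfl; simp
  | succ m ih =>
    intro a l
    simp only [Eset, Finset.mem_biUnion, Finset.mem_image, Finset.mem_Icc]
    constructor
    · rintro ⟨b, ⟨hb1, hba⟩, t, ht, rfl⟩
      rw [ih] at ht
      obtain ⟨hlen, hsort, hbd⟩ := ht
      refine ⟨by simp [hlen], ?_, ?_⟩
      · rw [List.pairwise_cons]
        exact ⟨fun x hx => (hbd x hx).2, hsort⟩
      · rintro x hx
        rcases List.mem_cons.mp hx with rfl | hx
        · exact ⟨hb1, hba⟩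
        · exact ⟨(hbd x hx).1, le_trans (hbd x hx).2 hba⟩
    · rintro ⟨hlen, hsort, hbd⟩
      match l with
      | b :: t =>
        rw [List.pairwise_cons] at hsort
        refine ⟨b, ⟨(hbd b (by simp)).1, (hbd b (by simp)).2⟩, t, ?_, rfl⟩
        rw [ih]
        refine ⟨by simpa using hlen, hsort.2, fun x hx => ⟨(hbd x (by simp [hx])).1, hsort.1 x hx⟩⟩

lemma repStat_single (a : ℕ) : repStat [a] = 0 := by simp [repStat]

lemma repStat_cons_cons (a b : ℕ) (s : List ℕ) :
    repStat (a :: b :: s) = (if a = b then 1 else 0) + repStat (b :: s) := by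
  simp only [repStat, List.length_cons]
  rw [show a :: b :: s = [a] ++ (b :: s) from rfl]
  simp only [Nat.add_sub_cancel, List.range_succ_eq_map, List.filter_cons]
  rw [List.filter_map]
  simp only [Function.comp_def]
  split <;> rename_i h <;> simp [List.getD] at h <;> simp [h] <;> omega

lemma disj_heads (f : ℕ → ℕ) : ∀ (s : Finset ℕ),
    Set.PairwiseDisjoint ↑s (fun b => (Eset b (f b)).image (b :: ·)) := by
  intro s b _ b' _ hbb'
  simp only [Function.onFun]
  rw [Finset.disjoint_left]
  rintro l hl hl'
  simp only [Finset.mem_image] at hl hl'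
  obtain ⟨t, _, rfl⟩ := hl
  obtain ⟨t', _, h⟩ := hl'
  exact hbb' (by injection h.symm)

lemma Dsum : ∀ (m a : ℕ), 1 ≤ a →
    ∑ t ∈ Eset a m, (2:ℤ) ^ repStat (a :: t) = hfun m a := by
  intro m
  induction m with
  | zero => intro a ha; simp [Eset, hfun, repStat_single]
  | succ m ih =>
    intro a ha
    show ∑ t ∈ (Finset.Icc 1 a).biUnion fun b => (Eset b m).image (b :: ·), _ = _
    rw [Finset.sum_biUnion (disj_heads (fun _ => m) _)]
    have hstep : ∀ b ∈ Finset.Icc 1 a,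
        ∑ t ∈ (Eset b m).image (b :: ·), (2:ℤ) ^ repStat (a :: t)
          = (if a = b then 1 else 0 : ℤ) * hfun m b + hfun m b := by
      intro b hb
      rw [Finset.mem_Icc] at hb
      rw [Finset.sum_image (by intro x _ y _ h; injection h)]
      have : ∀ s ∈ Eset b m, (2:ℤ) ^ repStat (a :: b :: s)
          = ((if a = b then 1 else 0 : ℤ) + 1) * (2:ℤ) ^ repStat (b :: s) := by
        intro s _
        rw [repStat_cons_cons, pow_add]
        split <;> ring
      rw [Finset.sum_congr rfl this, ← Finset.mul_sum, ih b hb.1]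
      ring
    rw [Finset.sum_congr rfl hstep, Finset.sum_add_distrib]
    show _ = hfun m a + _
    congr 1
    simp only [ite_mul, one_mul, zero_mul]
    rw [Finset.sum_ite_eq (Finset.Icc 1 a) a (fun b => hfun m b)]
    simp [Finset.mem_Icc, ha]

lemma AB : ∀ n : ℕ, 1 ≤ n →
    (∑ a ∈ Finset.Icc 1 n, (-1:ℤ)^a * hfun (n-a) a = -(Nat.fib n : ℤ)) ∧
    (∑ a ∈ Finset.Icc 1 n, (-1:ℤ)^a * Hfun (n-a) a
      = -(Nat.fib (n-1) : ℤ) + (-1)^n) := by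
  intro n hn
  induction n, hn using Nat.le_induction with
  | base => constructor <;> simp [hfun, Hfun]
  | succ n hn ih =>
    obtain ⟨ihA, ihB⟩ := ih
    have hfib : (Nat.fib (n+1) : ℤ) = Nat.fib n + Nat.fib (n-1) := by
      have := Nat.fib_add_two (n := n - 1)
      rw [show n - 1 + 2 = n + 1 from by omega, show n - 1 + 1 = n from by omega] at this
      push_cast [this]; ring
    have hA : ∑ a ∈ Finset.Icc 1 (n+1), (-1:ℤ)^a * hfun (n+1-a) a
        = -(Nat.fib (n+1) : ℤ) := by
      rw [Finset.sum_Icc_succ_top (by omega : 1 ≤ n+1)]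
      have hc : ∀ a ∈ Finset.Icc 1 n, (-1:ℤ)^a * hfun (n+1-a) a
          = (-1:ℤ)^a * hfun (n-a) a + (-1:ℤ)^a * Hfun (n-a) a := by
        intro a ha
        rw [Finset.mem_Icc] at ha
        rw [show n+1-a = (n-a)+1 from by omega, hfun_succ]
        ring
      rw [Finset.sum_congr rfl hc, Finset.sum_add_distrib, ihA, ihB]
      simp only [Nat.sub_self, pow_succ]
      have : hfun 0 (n+1) = 1 := rfl
      rw [this, hfib]
      ring
    refine ⟨hA, ?_⟩
    have hsplit : ∀ a ∈ Finset.Icc 1 (n+1), (-1:ℤ)^a * Hfun (n+1-a) a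
        = (-1:ℤ)^a * hfun (n+1-a) a + (-1:ℤ)^a * Hfun (n+1-a) (a-1) := by
      intro a ha
      rw [Finset.mem_Icc] at ha
      have : Hfun (n+1-a) a = Hfun (n+1-a) (a-1) + hfun (n+1-a) a := by
        unfold Hfun
        rw [show a = (a-1)+1 from by omega, Finset.sum_Icc_succ_top (by omega)]
        rw [show a - 1 + 1 = a from by omega]
      rw [this]; ring
    rw [Finset.sum_congr rfl hsplit, Finset.sum_add_distrib, hA]
    have hre : ∑ a ∈ Finset.Icc 1 (n+1), (-1:ℤ)^a * Hfun (n+1-a) (a-1)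
        = -(∑ a ∈ Finset.Icc 1 n, (-1:ℤ)^a * Hfun (n-a) a) := by
      have hmap : Finset.Icc 1 (n+1)
          = (Finset.Icc 0 n).map ⟨(· + 1), add_left_injective 1⟩ := by
        ext x
        simp only [Finset.mem_map, Finset.mem_Icc, Function.Embedding.coeFn_mk]
        constructor
        · intro h; exact ⟨x - 1, by omega, by omega⟩
        · rintro ⟨b, hb, rfl⟩; omega
      rw [hmap, Finset.sum_map]
      simp only [Function.Embedding.coeFn_mk, Nat.add_sub_cancel]
      have h0 : Finset.Icc 0 n = insert 0 (Finset.Icc 1 n) := by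
        ext x; simp [Finset.mem_Icc]; omega
      rw [h0, Finset.sum_insert (by simp)]
      rw [show n + 1 - (0+1) = n from by omega, Hfun_zero, mul_zero, zero_add]
      rw [← Finset.sum_neg_distrib]
      refine Finset.sum_congr rfl ?_
      intro a ha
      rw [Finset.mem_Icc] at ha
      rw [show n + 1 - (a+1) = n - a from by omega, pow_succ]
      ring
    rw [hre, ihB]
    rw [show n + 1 - 1 = n from by omega, hfib, pow_succ]
    ring

lemma part_set_eq (n : ℕ) (hn : 1 ≤ n) :
    {l : List ℕ | IsPartition l ∧ perim l = n}
      = ↑((Finset.Icc 1 n).biUnion fun a => (Eset a (n - a)).image (a :: ·)) := by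
  ext l
  simp only [Set.mem_setOf_eq, Finset.coe_biUnion, Set.mem_iUnion, Finset.mem_coe,
    Finset.mem_image, Finset.mem_Icc, Finset.mem_coe]
  constructor
  · rintro ⟨⟨hne, hsort, hpos⟩, hperim⟩
    match l with
    | a :: t =>
      rw [List.pairwise_cons] at hsort
      have hlen : a + t.length = n := by
        simp [perim] at hperim; omega
      have ha1 : 1 ≤ a := hpos a (by simp)
      refine ⟨a, ⟨ha1, by omega⟩, t, ?_, rfl⟩
      rw [mem_Eset]
      exact ⟨by omega, hsort.2, fun x hx => ⟨hpos x (by simp [hx]), hsort.1 x hx⟩⟩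
  · rintro ⟨a, ⟨ha1, han⟩, t, ht, rfl⟩
    rw [mem_Eset] at ht
    obtain ⟨hlen, hsort, hbd⟩ := ht
    refine ⟨⟨by simp, ?_, ?_⟩, ?_⟩
    · rw [List.pairwise_cons]
      exact ⟨fun x hx => (hbd x hx).2, hsort⟩
    · rintro x hx
      rcases List.mem_cons.mp hx with rfl | hx
      · exact ha1
      · exact (hbd x hx).1
    · simp [perim, hlen]; omega

theorem h_at_two_fibonacci (n : ℕ) (hn : 1 ≤ n) :
    (∑ᶠ l ∈ {l : List ℕ | IsPartition l ∧ perim l = n},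
        ((-1 : ℤ) ^ l.length * 2 ^ repStat l)).natAbs = Nat.fib n := by
  rw [part_set_eq n hn, finsum_mem_coe_finset]
  rw [Finset.sum_biUnion (disj_heads (fun a => n - a) _)]
  have hinner : ∀ a ∈ Finset.Icc 1 n,
      ∑ l ∈ (Eset a (n-a)).image (a :: ·), ((-1:ℤ) ^ l.length * 2 ^ repStat l)
        = (-1:ℤ)^(n+1) * ((-1:ℤ)^a * hfun (n-a) a) := by
    intro a ha
    rw [Finset.mem_Icc] at ha
    rw [Finset.sum_image (by intro x _ y _ h; injection h)]
    have hc : ∀ t ∈ Eset a (n-a), ((-1:ℤ) ^ (a :: t).length * 2 ^ repStat (a :: t))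
        = (-1:ℤ)^(n-a+1) * (2:ℤ) ^ repStat (a :: t) := by
      intro t ht
      rw [mem_Eset] at ht
      simp [ht.1]
    rw [Finset.sum_congr rfl hc, ← Finset.mul_sum, Dsum (n-a) a ha.1]
    have hsign : (-1:ℤ)^(n+1) * (-1:ℤ)^a = ((-1:ℤ))^(n-a+1) := by
      rw [← pow_add, show n + 1 + a = (n - a + 1) + (a + a) from by omega, pow_add,
        Even.neg_one_pow (⟨a, rfl⟩ : Even (a + a)), mul_one]
    rw [← hsign]; ring
  rw [Finset.sum_congr rfl hinner, ← Finset.mul_sum, (AB n hn).1]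
  rw [Int.natAbs_mul, Int.natAbs_neg, Int.natAbs_pow]
  simp
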